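/- arXiv:1411.7524 — 2 statements merged into one kernel-verified Lean document; each statement's English description precedes it below -/
import Mathlib

section
/- Let K = ℤ/Nℤ and let G_N be the Heisenberg group of order N³ on μ_N × (K × K̂) with multiplication (a, k, l)·(a', k', l') = (a·a'·l'(k), k+k', l·l'). Then every abelian subgroup of G_N has order at most N², hence index at least N in G_N. -/
lemma char_pow_card {N : ℕ} (φ : AddChar (ZMod N) ℂˣ) (x : ZMod N) : (φ x) ^ N = 1 := by
  rw [← AddChar.map_nsmul_eq_pow, nsmul_eq_mul, ZMod.natCast_self, zero_mul,
    AddChar.map_zero_eq_one]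

lemma char_mem_rootsOfUnity {N : ℕ} (φ : AddChar (ZMod N) ℂˣ) (x : ZMod N) :
    φ x ∈ rootsOfUnity N ℂ := (mem_rootsOfUnity N _).2 (char_pow_card φ x)

/-- The finite Heisenberg-type group on `μ_N × (ℤ/Nℤ × (ℤ/Nℤ)^)`. -/
@[ext] structure HeisMu (N : ℕ) where
  a : rootsOfUnity N ℂ
  k : ZMod N
  l : AddChar (ZMod N) ℂˣ

namespace HeisMu
variable {N : ℕ}

instance : Group (HeisMu N) where
  mul x y := ⟨x.a * y.a * ⟨y.l x.k, char_mem_rootsOfUnity y.l x.k⟩, x.k + y.k, x.l * y.l⟩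
  one := ⟨1, 0, 1⟩
  inv x := ⟨x.a⁻¹ * ⟨x.l x.k, char_mem_rootsOfUnity x.l x.k⟩, -x.k, x.l⁻¹⟩
  mul_assoc x y z := by
    refine HeisMu.ext ?_ ?_ ?_
    · show (x.a * y.a * ⟨y.l x.k, _⟩) * z.a * ⟨z.l (x.k + y.k), _⟩ =
        x.a * (y.a * z.a * ⟨z.l y.k, _⟩) * ⟨(y.l * z.l) x.k, _⟩
      apply Subtype.ext
      apply Units.ext
      push_cast [AddChar.map_add_eq_mul, AddChar.mul_apply]
      ring
    · show x.k + y.k + z.k = x.k + (y.k + z.k); ring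
    · show x.l * y.l * z.l = x.l * (y.l * z.l); exact mul_assoc _ _ _
  one_mul x := by
    refine HeisMu.ext ?_ ?_ ?_
    · show 1 * x.a * ⟨x.l 0, _⟩ = x.a
      apply Subtype.ext; apply Units.ext
      push_cast [AddChar.map_zero_eq_one]
      ring
    · show 0 + x.k = x.k; ring
    · show 1 * x.l = x.l; exact one_mul (M := AddChar (ZMod N) ℂˣ) x.l
  mul_one x := by
    refine HeisMu.ext ?_ ?_ ?_
    · show x.a * 1 * ⟨(1 : AddChar (ZMod N) ℂˣ) x.k, _⟩ = x.a
      apply Subtype.ext; apply Units.ext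
      push_cast [AddChar.one_apply]
      ring
    · show x.k + 0 = x.k; ring
    · show x.l * 1 = x.l; exact mul_one (M := AddChar (ZMod N) ℂˣ) x.l
  inv_mul_cancel x := by
    refine HeisMu.ext ?_ ?_ ?_
    · show (x.a⁻¹ * ⟨x.l x.k, _⟩) * x.a * ⟨x.l (-x.k), _⟩ = 1
      apply Subtype.ext; apply Units.ext
      push_cast [AddChar.map_neg_eq_inv]
      field_simp
    · show -x.k + x.k = 0; ring
    · show x.l⁻¹ * x.l = 1; exact inv_mul_cancel (G := AddChar (ZMod N) ℂˣ) x.l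

theorem mul_def (x y : HeisMu N) :
    x * y = ⟨x.a * y.a * ⟨y.l x.k, char_mem_rootsOfUnity y.l x.k⟩,
      x.k + y.k, x.l * y.l⟩ := rfl
theorem one_def : (1 : HeisMu N) = ⟨1, 0, 1⟩ := rfl

end HeisMu


section Aux

open Finset

variable {N : ℕ}

/-- Cast a `ℂˣ`-valued additive character to a `ℂ`-valued one. -/
noncomputable def toC (l : AddChar (ZMod N) ℂˣ) : AddChar (ZMod N) ℂ :=
  (Units.coeHom ℂ).compAddChar l

lemma toC_apply (l : AddChar (ZMod N) ℂˣ) (x : ZMod N) : toC l x = (l x : ℂ) := rfl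

lemma toC_injective : Function.Injective (toC (N := N)) :=
  MonoidHom.compAddChar_injective_right _ fun _ _ h => Units.ext h

/-- Lift a `ℂ`-valued additive character to a `ℂˣ`-valued one. -/
noncomputable def ofC (ψ : AddChar (ZMod N) ℂ) : AddChar (ZMod N) ℂˣ where
  toFun x := (ψ.val_isUnit x).unit
  map_zero_eq_one' := by ext; simp
  map_add_eq_mul' := by intro a b; ext; simp [ψ.map_add_eq_mul]

lemma toC_ofC (ψ : AddChar (ZMod N) ℂ) : toC (ofC ψ) = ψ := by
  ext x; simp [toC_apply, ofC]

lemma toC_bijective : Function.Bijective (toC (N := N)) :=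
  ⟨toC_injective, fun ψ => ⟨ofC ψ, toC_ofC ψ⟩⟩

lemma toC_one : toC (1 : AddChar (ZMod N) ℂˣ) = 0 := by
  ext x; simp [toC_apply]

lemma toC_mul (l l' : AddChar (ZMod N) ℂˣ) : toC (l * l') = toC l + toC l' := by
  ext x
  rw [AddChar.add_apply, toC_apply, toC_apply, toC_apply, AddChar.mul_apply]
  push_cast
  ring

/-- The key counting lemma: a "self-orthogonal" subgroup w.r.t. an injective pairing
into the character group has square cardinality at most the cardinality of the group. -/
lemma key_card_le {P : Type*} [AddCommGroup P] [Fintype P]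
    (B : AddSubgroup P) (Ψ : P →+ AddChar P ℂ)
    (hinj : Function.Injective Ψ)
    (hiso : ∀ b ∈ B, ∀ x ∈ B, (Ψ b) x = 1) :
    Nat.card B * Nat.card B ≤ Fintype.card P := by
  classical
  haveI : Fintype B := Fintype.ofFinite _
  set χ : P → AddChar B ℂ := fun x =>
    { toFun := fun b => Ψ (b : P) x
      map_zero_eq_one' := by simp
      map_add_eq_mul' := by
        intro a b
        show Ψ (((a + b : B) : P)) x = Ψ ((a : B) : P) x * Ψ ((b : B) : P) x
        rw [AddSubgroup.coe_add, map_add, AddChar.add_apply] } with hχ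
  have h1 : ∑ b : B, ∑ x : P, (Ψ (b : P)) x = (Fintype.card P : ℂ) := by
    have hterm : ∀ b : B, ∑ x : P, (Ψ (b : P)) x
        = if (b : P) = 0 then (Fintype.card P : ℂ) else 0 := by
      intro b
      rw [AddChar.sum_eq_ite]
      congr 1
      simp only [eq_iff_iff]
      constructor
      · intro h
        exact hinj (by rw [h, map_zero])
      · intro h; rw [h, map_zero]
    rw [Finset.sum_congr rfl fun b _ => hterm b]
    rw [Finset.sum_eq_single (0 : B)]
    · simp
    · intro b _ hb
      rw [if_neg (by simpa using hb)]
    · simp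
  set T := (univ.filter fun x : P => χ x = 0).card with hT
  have h2 : ∑ x : P, ∑ b : B, (Ψ (b : P)) x = ((T * Fintype.card B : ℕ) : ℂ) := by
    have hterm : ∀ x : P, ∑ b : B, (Ψ (b : P)) x
        = if χ x = 0 then (Fintype.card B : ℂ) else 0 := by
      intro x
      have := AddChar.sum_eq_ite (χ x)
      simpa [hχ] using this
    rw [Finset.sum_congr rfl fun x _ => hterm x, Finset.sum_ite, Finset.sum_const,
      Finset.sum_const_zero, add_zero]
    push_cast
    simp [hT]
  have hcards : Fintype.card P = T * Fintype.card B := by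
    have := h1.symm.trans ((Finset.sum_comm).trans h2)
    exact_mod_cast this
  have hBT : Fintype.card B ≤ T := by
    have hsub : ∀ b : B, (b : P) ∈ (univ.filter fun x : P => χ x = 0) := by
      intro b
      simp only [mem_filter, mem_univ, true_and]
      ext b'
      exact (hiso (b' : P) b'.2 (b : P) b.2).trans (by simp)
    calc Fintype.card B = (univ : Finset B).card := (Finset.card_univ).symm
      _ ≤ T := Finset.card_le_card_of_injOn (fun b => (b : P))
          (fun b _ => hsub b) fun a _ b _ h => Subtype.ext h
  calc Nat.card B * Nat.card B
      = Fintype.card B * Fintype.card B := by rw [Nat.card_eq_fintype_card]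
    _ ≤ T * Fintype.card B := Nat.mul_le_mul_right _ hBT
    _ = Fintype.card P := hcards.symm

/-- The symplectic pairing on `ZMod N × (ZMod N)^`. -/
noncomputable def pairing (N : ℕ) :
    (ZMod N × AddChar (ZMod N) ℂ) →+ AddChar (ZMod N × AddChar (ZMod N) ℂ) ℂ where
  toFun p :=
    { toFun := fun q => p.2 q.1 * q.2 (-p.1)
      map_zero_eq_one' := by simp
      map_add_eq_mul' := by
        intro q r
        simp only [Prod.fst_add, Prod.snd_add, AddChar.map_add_eq_mul, AddChar.add_apply]
        ring }
  map_zero' := by ext q; simp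
  map_add' p p' := by
    ext q
    simp only [AddChar.coe_mk, AddChar.add_apply, Prod.fst_add, Prod.snd_add, neg_add,
      AddChar.map_add_eq_mul]
    ring

lemma pairing_apply (p q : ZMod N × AddChar (ZMod N) ℂ) :
    pairing N p q = p.2 q.1 * q.2 (-p.1) := rfl

lemma pairing_injective [NeZero N] : Function.Injective (pairing N) := by
  rw [injective_iff_map_eq_zero]
  intro p hp
  have h : ∀ q : ZMod N × AddChar (ZMod N) ℂ, p.2 q.1 * q.2 (-p.1) = 1 := by
    intro q
    have := DFunLike.congr_fun hp q
    simpa [pairing_apply] using this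
  have h1 : p.2 = 0 := by
    ext k
    have := h (k, 0)
    simpa using this
  have h2 : p.1 = 0 := by
    have hall : ∀ ψ : AddChar (ZMod N) ℂ, ψ (-p.1) = 1 := by
      intro ψ
      have := h (0, ψ)
      simpa [h1] using this
    have := AddChar.forall_apply_eq_zero.mp hall
    simpa [neg_eq_zero] using this
  exact Prod.ext h2 h1

/-- Projection of the Heisenberg group onto `K × K̂`. -/
noncomputable def heisProj (N : ℕ) :
    HeisMu N →* Multiplicative (ZMod N × AddChar (ZMod N) ℂ) where
  toFun x := Multiplicative.ofAdd (x.k, toC x.l)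
  map_one' := by
    show Multiplicative.ofAdd ((0 : ZMod N), toC 1) = 1
    rw [toC_one]; rfl
  map_mul' x y := by
    show Multiplicative.ofAdd (x.k + y.k, toC (x.l * y.l)) = _
    rw [toC_mul]; rfl

/-- `HeisMu N` as a product type. -/
def heisEquiv (N : ℕ) : HeisMu N ≃ rootsOfUnity N ℂ × ZMod N × AddChar (ZMod N) ℂˣ where
  toFun x := (x.a, x.k, x.l)
  invFun p := ⟨p.1, p.2.1, p.2.2⟩
  left_inv x := rfl
  right_inv p := rfl

end Aux

/-- Every abelian subgroup of the order-`N³` group `G_N` on `μ_N × (ℤ/Nℤ × (ℤ/Nℤ)^)`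
has order at most `N²`, hence index at least `N`. -/
theorem statement3 (N : ℕ) (hN : 0 < N) (A : Subgroup (HeisMu N))
    (hA : ∀ x ∈ A, ∀ y ∈ A, x * y = y * x) :
    Nat.card A ≤ N ^ 2 ∧ N ≤ A.index := by
  haveI : NeZero N := ⟨hN.ne'⟩
  classical
  haveI finChar : Finite (AddChar (ZMod N) ℂˣ) := Finite.of_injective _ toC_injective
  haveI : Finite (HeisMu N) := Finite.of_equiv _ (heisEquiv N).symm
  set f : A →* Multiplicative (ZMod N × AddChar (ZMod N) ℂ) :=
    (heisProj N).comp A.subtype with hf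
  -- the commutation relation
  have hcomm : ∀ x, x ∈ A → ∀ y, y ∈ A → x.l y.k = y.l x.k := by
    intro x hx y hy
    have h := congrArg (fun z : HeisMu N => ((z.a : ℂˣ))) (hA x hx y hy)
    simp only [HeisMu.mul_def] at h
    push_cast at h
    rw [mul_comm (x.a : ℂˣ) (y.a : ℂˣ)] at h
    exact (mul_left_cancel h).symm
  -- the kernel of f embeds into the roots of unity
  have hker : Nat.card f.ker ≤ N := by
    have hinj : Function.Injective (fun z : f.ker => ((z : A) : HeisMu N).a) := by
      intro z w h
      have hz := z.2
      have hw := w.2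
      rw [MonoidHom.mem_ker] at hz hw
      have hz' : (((z : A) : HeisMu N).k, toC ((z : A) : HeisMu N).l) = (0, 0) :=
        ofAdd_eq_one.mp hz
      have hw' : (((w : A) : HeisMu N).k, toC ((w : A) : HeisMu N).l) = (0, 0) :=
        ofAdd_eq_one.mp hw
      have hzk := congrArg Prod.fst hz'
      have hwk := congrArg Prod.fst hw'
      have hzl : toC ((z : A) : HeisMu N).l = toC 1 := by
        rw [toC_one]; exact congrArg Prod.snd hz'
      have hwl : toC ((w : A) : HeisMu N).l = toC 1 := by
        rw [toC_one]; exact congrArg Prod.snd hw'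
      refine Subtype.ext (Subtype.ext (HeisMu.ext h ?_ ?_))
      · exact hzk.trans hwk.symm
      · exact (toC_injective hzl).trans (toC_injective hwl).symm
    calc Nat.card f.ker ≤ Nat.card (rootsOfUnity N ℂ) :=
          Nat.card_le_card_of_injective _ hinj
      _ = N := by rw [Complex.card_rootsOfUnity]
  -- the range of f, as an additive subgroup
  set B : AddSubgroup (ZMod N × AddChar (ZMod N) ℂ) :=
    { carrier := {p | Multiplicative.ofAdd p ∈ f.range}
      zero_mem' := by exact one_mem f.range
      add_mem' := by
        intro p q hp hq
        show Multiplicative.ofAdd (p + q) ∈ f.range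
        exact mul_mem hp hq
      neg_mem' := by
        intro p hp
        show Multiplicative.ofAdd (-p) ∈ f.range
        exact inv_mem hp } with hB
  have hcardB : Nat.card f.range = Nat.card B :=
    Nat.card_congr ⟨fun q =>
        ⟨Multiplicative.toAdd (q : Multiplicative (ZMod N × AddChar (ZMod N) ℂ)), by exact q.2⟩,
      fun p => ⟨Multiplicative.ofAdd (p : ZMod N × AddChar (ZMod N) ℂ), by exact p.2⟩,
      fun q => rfl, fun p => rfl⟩
  -- membership description of B
  have hmemB : ∀ p, p ∈ B → ∃ x : HeisMu N, x ∈ A ∧ p = (x.k, toC x.l) := by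
    intro p hp
    obtain ⟨⟨x, hx⟩, hfx⟩ := hp
    exact ⟨x, hx, (Multiplicative.ofAdd.injective hfx).symm⟩
  -- isotropy
  have hiso : ∀ b ∈ B, ∀ q ∈ B, (pairing N b) q = 1 := by
    intro b hb q hq
    obtain ⟨x, hx, rfl⟩ := hmemB b hb
    obtain ⟨y, hy, rfl⟩ := hmemB q hq
    rw [pairing_apply]
    calc (toC x.l) y.k * (toC y.l) (-x.k)
        = ((x.l y.k : ℂˣ) : ℂ) * ((y.l (-x.k) : ℂˣ) : ℂ) := rfl
      _ = ((y.l x.k * y.l (-x.k) : ℂˣ) : ℂ) := by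
          rw [hcomm x hx y hy]; push_cast; ring
      _ = 1 := by
          rw [← AddChar.map_add_eq_mul, add_neg_cancel, AddChar.map_zero_eq_one, Units.val_one]
  -- the range has cardinality at most N
  have hrange : Nat.card B ≤ N := by
    have hk := key_card_le B (pairing N) pairing_injective hiso
    have hcardP : Fintype.card (ZMod N × AddChar (ZMod N) ℂ) = N * N := by
      rw [Fintype.card_prod, ZMod.card, AddChar.card_eq, ZMod.card]
    rw [hcardP] at hk
    by_contra hc
    push_neg at hc
    exact absurd hk (not_le.mpr (Nat.mul_self_lt_mul_self hc))
  -- cardinality bound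
  have hcardA : Nat.card A = Nat.card f.range * Nat.card f.ker := by
    rw [Subgroup.card_eq_card_quotient_mul_card_subgroup f.ker]
    congr 1
    exact Nat.card_congr (QuotientGroup.quotientKerEquivRange f).toEquiv
  have hA2 : Nat.card A ≤ N ^ 2 := by
    rw [hcardA, hcardB]
    calc Nat.card B * Nat.card f.ker ≤ N * N := Nat.mul_le_mul hrange hker
      _ = N ^ 2 := (sq N).symm
  refine ⟨hA2, ?_⟩
  -- cardinality of the whole group
  have hcardG : Nat.card (HeisMu N) = N ^ 3 := by
    rw [Nat.card_congr (heisEquiv N), Nat.card_prod, Nat.card_prod]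
    have h1 : Nat.card (rootsOfUnity N ℂ) = N := by
      rw [Complex.card_rootsOfUnity]
    have h3 : Nat.card (AddChar (ZMod N) ℂˣ) = N := by
      rw [Nat.card_eq_of_bijective _ toC_bijective, Nat.card_eq_fintype_card,
        AddChar.card_eq, ZMod.card]
    rw [h1, Nat.card_zmod, h3]
    ring
  have hmul := Subgroup.card_mul_index A
  have h5 : N ^ 2 * N ≤ N ^ 2 * A.index := by
    calc N ^ 2 * N = Nat.card (HeisMu N) := by rw [hcardG]; ring
      _ = Nat.card A * A.index := hmul.symm
      _ ≤ N ^ 2 * A.index := Nat.mul_le_mul_right _ hA2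
  exact Nat.le_of_mul_le_mul_left h5 (by positivity)
end

section
/- Let K be a finite abelian group and A an abelian subgroup of the group Γ on ℂ* × (K × K̂) with multiplication (a,k,l)·(a',k',l') = (a·a'·l'(k), k+k', l·l'). If A is finite, then the image of A under the projection to K × K̂ is a subgroup S satisfying: l'(k) = l(k') for all (k,l), (k',l') ∈ S, and |S| ≤ |K|. -/
@[ext] structure HeisC (K : Type) [AddCommGroup K] where
  a : ℂˣ
  k : K
  l : AddChar K ℂˣ

namespace HeisC
variable {K : Type} [AddCommGroup K]

instance : Group (HeisC K) where
  mul x y := ⟨x.a * y.a * y.l x.k, x.k + y.k, x.l * y.l⟩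
  one := ⟨1, 0, 1⟩
  inv x := ⟨x.a⁻¹ * x.l x.k, -x.k, x.l⁻¹⟩
  mul_assoc x y z := by
    refine HeisC.ext ?_ ?_ ?_
    · show (x.a * y.a * y.l x.k) * z.a * z.l (x.k + y.k) =
        x.a * (y.a * z.a * z.l y.k) * (y.l * z.l) x.k
      apply Units.ext
      simp only [AddChar.map_add_eq_mul, AddChar.mul_apply, Units.val_mul]
      ring
    · show x.k + y.k + z.k = x.k + (y.k + z.k); exact add_assoc _ _ _
    · show x.l * y.l * z.l = x.l * (y.l * z.l); exact mul_assoc _ _ _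
  one_mul x := by
    refine HeisC.ext ?_ ?_ ?_
    · show 1 * x.a * x.l 0 = x.a
      rw [AddChar.map_zero_eq_one, one_mul, mul_one]
    · show 0 + x.k = x.k; exact zero_add _
    · show 1 * x.l = x.l; exact one_mul (M := AddChar K ℂˣ) x.l
  mul_one x := by
    refine HeisC.ext ?_ ?_ ?_
    · show x.a * 1 * (1 : AddChar K ℂˣ) x.k = x.a
      rw [AddChar.one_apply, mul_one, mul_one]
    · show x.k + 0 = x.k; exact add_zero _
    · show x.l * 1 = x.l; exact mul_one (M := AddChar K ℂˣ) x.l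
  inv_mul_cancel x := by
    refine HeisC.ext ?_ ?_ ?_
    · show (x.a⁻¹ * x.l x.k) * x.a * x.l (-x.k) = 1
      rw [AddChar.map_neg_eq_inv]
      apply Units.ext
      simp only [Units.val_mul, Units.val_inv_eq_inv_val, Units.val_one]
      field_simp
    · show -x.k + x.k = 0; exact neg_add_cancel _
    · show x.l⁻¹ * x.l = 1; exact inv_mul_cancel _

theorem mul_def (x y : HeisC K) :
    x * y = ⟨x.a * y.a * y.l x.k, x.k + y.k, x.l * y.l⟩ := rfl
theorem one_def : (1 : HeisC K) = ⟨1, 0, 1⟩ := rfl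
theorem inv_def (x : HeisC K) : x⁻¹ = ⟨x.a⁻¹ * x.l x.k, -x.k, x.l⁻¹⟩ := rfl

end HeisC


noncomputable section AuxStatement19

lemma units_char_inj (G : Type*) [AddCommGroup G] :
    Function.Injective (fun ψ : AddChar G ℂˣ => (Units.coeHom ℂ).compAddChar ψ) := by
  intro ψ₁ ψ₂ h
  ext a
  have h' : ((ψ₁ a : ℂˣ) : ℂ) = ((ψ₂ a : ℂˣ) : ℂ) := DFunLike.congr_fun h a
  exact h'

instance finUnitsChar (G : Type*) [AddCommGroup G] [Finite G] : Finite (AddChar G ℂˣ) :=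
  Finite.of_injective _ (units_char_inj G)

lemma card_units_char_le (G : Type*) [AddCommGroup G] [Finite G] :
    Nat.card (AddChar G ℂˣ) ≤ Nat.card G := by
  cases nonempty_fintype G
  calc Nat.card (AddChar G ℂˣ) ≤ Nat.card (AddChar G ℂ) :=
        Nat.card_le_card_of_injective _ (units_char_inj G)
    _ ≤ Nat.card G := by
        simp only [Nat.card_eq_fintype_card]
        exact AddChar.card_addChar_le ..

end AuxStatement19

/-- If `A` is a finite abelian subgroup of the group `Γ` on `ℂ* × (K × K̂)`, then the
image of `A` in `K × K̂` is isotropic (`l'(k) = l(k')` on it) and has order at most `|K|`. -/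
theorem statement19 (K : Type) [AddCommGroup K] [Finite K]
    (A : Subgroup (HeisC K)) (hA : ∀ x ∈ A, ∀ y ∈ A, x * y = y * x)
    (hfin : Finite A) :
    (∀ x ∈ A, ∀ y ∈ A, y.l x.k = x.l y.k) ∧
    Nat.card ((fun x : HeisC K => (x.k, x.l)) '' (A : Set (HeisC K))) ≤
      Nat.card K := by
  classical
  have h1 : ∀ x ∈ A, ∀ y ∈ A, y.l x.k = x.l y.k := by
    intro x hx y hy
    have h := congrArg HeisC.a (hA x hx y hy)
    simp only [HeisC.mul_def] at h
    rw [mul_comm x.a y.a, mul_assoc, mul_assoc] at h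
    exact mul_left_cancel (mul_left_cancel h)
  refine ⟨h1, ?_⟩
  set S : Set (K × AddChar K ℂˣ) := (fun x : HeisC K => (x.k, x.l)) '' (A : Set (HeisC K))
    with hS
  have hone : ((0 : K), (1 : AddChar K ℂˣ)) ∈ S := ⟨1, A.one_mem, rfl⟩
  have hmul : ∀ p ∈ S, ∀ q ∈ S, (p.1 + q.1, p.2 * q.2) ∈ S := by
    rintro _ ⟨x, hx, rfl⟩ _ ⟨y, hy, rfl⟩
    exact ⟨x * y, A.mul_mem hx hy, rfl⟩
  have hinv : ∀ p ∈ S, (-p.1, p.2⁻¹) ∈ S := by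
    rintro _ ⟨x, hx, rfl⟩
    exact ⟨x⁻¹, A.inv_mem hx, rfl⟩
  have hiso : ∀ p ∈ S, ∀ q ∈ S, q.2 p.1 = p.2 q.1 := by
    rintro _ ⟨x, hx, rfl⟩ _ ⟨y, hy, rfl⟩
    exact h1 x hx y hy
  -- the projection of S to K, as an additive subgroup
  let SK : AddSubgroup K :=
    { carrier := Prod.fst '' S
      zero_mem' := ⟨_, hone, rfl⟩
      add_mem' := by
        rintro a b ⟨p, hp, rfl⟩ ⟨q, hq, rfl⟩
        exact ⟨_, hmul p hp q hq, rfl⟩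
      neg_mem' := by
        rintro a ⟨p, hp, rfl⟩
        exact ⟨_, hinv p hp, rfl⟩ }
  -- finiteness of S
  have hSfin : Finite S := Set.Finite.to_subtype (Set.Finite.image _ (Set.toFinite _))
  -- the subtype of characters l with (0,l) ∈ S
  let L0 := {l : AddChar K ℂˣ // ((0 : K), l) ∈ S}
  haveI : Finite L0 := Subtype.finite
  -- choose a section of the projection S → SK
  have hsec : ∀ k : K, ∃ l, k ∈ Prod.fst '' S → (k, l) ∈ S := by
    intro k
    by_cases hk : k ∈ Prod.fst '' S
    · obtain ⟨p, hp, hpk⟩ := hk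
      exact ⟨p.2, fun _ => by rw [← hpk]; exact hp⟩
    · exact ⟨1, fun h => absurd h hk⟩
  choose σ hσ using hsec
  -- injection S ↪ SK × L0
  have hinj1 : Nat.card S ≤ Nat.card SK * Nat.card L0 := by
    rw [← Nat.card_prod]
    refine Nat.card_le_card_of_injective
      (fun p => (⟨p.1.1, ⟨p.1, p.2, rfl⟩⟩, ⟨p.1.2 * (σ p.1.1)⁻¹, ?_⟩)) ?_
    · have h0 : (p.1.1 + -p.1.1, p.1.2 * (σ p.1.1)⁻¹) ∈ S :=
        hmul _ p.2 _ (hinv _ (hσ p.1.1 ⟨p.1, p.2, rfl⟩))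
      rwa [add_neg_cancel] at h0
    · rintro ⟨⟨k, l⟩, hp⟩ ⟨⟨k', l'⟩, hq⟩ h
      have hk : k = k' := congrArg (fun z => (z.1 : K)) h
      have hl : l * (σ k)⁻¹ = l' * (σ k')⁻¹ := congrArg (fun z => (z.2 : AddChar K ℂˣ)) h
      subst hk
      have : l = l' := by
        have h2 := congrArg (· * σ k) hl
        simpa only [inv_mul_cancel_right] using h2
      simp [this]
  -- L0 injects into the characters of the quotient
  have hker : ∀ l : L0, ∀ k ∈ SK, l.1 k = 1 := by
    rintro l k ⟨p, hp, rfl⟩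
    have h2 := hiso p hp (0, l.1) l.2
    exact h2.trans (AddChar.map_zero_eq_one p.2)
  have hinj2 : Nat.card L0 ≤ Nat.card (AddChar (K ⧸ SK) ℂˣ) := by
    refine Nat.card_le_card_of_injective (fun l =>
      AddChar.toAddMonoidHomEquiv.symm
        (QuotientAddGroup.lift SK (AddChar.toAddMonoidHomEquiv l.1)
          (fun k hk => show Additive.ofMul (l.1 k) = 0 by
            rw [hker l k hk]; rfl))) ?_
    intro l l' h
    refine Subtype.ext (DFunLike.ext _ _ fun k => ?_)
    have := DFunLike.congr_fun h ((k : K) : K ⧸ SK)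
    exact this
  have hinj3 : Nat.card (AddChar (K ⧸ SK) ℂˣ) ≤ Nat.card (K ⧸ SK) :=
    card_units_char_le _
  have hcard : Nat.card SK * Nat.card (K ⧸ SK) = Nat.card K := by
    rw [AddSubgroup.card_eq_card_quotient_mul_card_addSubgroup SK, mul_comm]
  calc Nat.card S ≤ Nat.card SK * Nat.card L0 := hinj1
    _ ≤ Nat.card SK * Nat.card (K ⧸ SK) :=
        Nat.mul_le_mul_left _ (hinj2.trans hinj3)
    _ = Nat.card K := hcard
end
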